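/- Let 1 ≤ p < ∞ and let w be the unilateral weight given by w_ν = ((ν+1)/ν)^{1/(2p)} for ν ≥ 1. Then the unilateral weighted backward shift B_w on ℓ^p(ℤ₊) is mixing, and for every x ∈ ℓ^p(ℤ₊) the set {n ∈ ℕ : ‖B_w^n x − e_0‖_p < 1/2} has upper Banach density equal to zero. -/

import Mathlib

open Filter Topology
open scoped ENNReal

noncomputable def blockCount (A : Set ℕ) (k s : ℕ) : ℕ :=
  Nat.card (A ∩ Set.Icc (k + 1) (k + s) : Set ℕ)

/-- upper Banach density -/
noncomputable def upperBanachDensity (A : Set ℕ) : ℝ :=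
  Filter.limsup (fun s : ℕ =>
    (Filter.limsup (fun k : ℕ => (blockCount A k s : ℝ)) Filter.atTop) / s) Filter.atTop

/-- lower Banach density -/
noncomputable def lowerBanachDensity (A : Set ℕ) : ℝ :=
  Filter.liminf (fun s : ℕ =>
    (Filter.liminf (fun k : ℕ => (blockCount A k s : ℝ)) Filter.atTop) / s) Filter.atTop

/-- the family `BD̄` of sets of positive upper Banach density -/
def upperBD (A : Set ℕ) : Prop := 0 < upperBanachDensity A

/-- the family `BD₁` of sets of lower Banach density one -/
def BDone (A : Set ℕ) : Prop := lowerBanachDensity A = 1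

/-- essential idempotent ultrafilter -/
def IsEssentialIdempotent (p : Ultrafilter ℕ) : Prop :=
  (∀ A : Set ℕ, A ∈ p ↔ {n : ℕ | {m : ℕ | n + m ∈ A} ∈ p} ∈ p) ∧
    ∀ A ∈ p, 0 < upperBanachDensity A

/-- membership in `𝒟*`, the intersection of all essential idempotents -/
def InDstar (A : Set ℕ) : Prop :=
  ∀ p : Ultrafilter ℕ, IsEssentialIdempotent p → A ∈ p

/-- limit of a real sequence along a family of subsets of ℕ -/
def FamilyLim (F : Set ℕ → Prop) (x : ℕ → ℝ) (y : ℝ) : Prop :=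
  ∀ V : Set ℝ, IsOpen V → y ∈ V → F {n | x n ∈ V}

/-- property `P_𝓕` for a sequence of maps -/
def SatisfiesP {X : Type*} [TopologicalSpace X] (T : ℕ → X → X) (F : Set ℕ → Prop) : Prop :=
  ∀ U : Set X, IsOpen U → U.Nonempty → ∃ x : X, F {n | T n x ∈ U}

/-- topological 𝒟-recurrence with respect to a sequence of scalars -/
def TopDRecurrentWrt {X : Type*} [NormedAddCommGroup X] [NormedSpace ℂ X]
    (T : X →L[ℂ] X) (l : ℕ → ℂ) : Prop :=
  ∃ p : Ultrafilter ℕ, IsEssentialIdempotent p ∧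
    ∀ U : Set X, IsOpen U → U.Nonempty → ∃ x : X, ∀ r : ℕ,
      {k : ℕ | 0 < upperBanachDensity
        {a : ℕ | ∀ j ≤ r, (T ^ (j * k)) (l a • (T ^ a) x) ∈ U}} ∈ p

/-- topological 𝒟-recurrence -/
def TopDRecurrent {X : Type*} [NormedAddCommGroup X] [NormedSpace ℂ X]
    (T : X →L[ℂ] X) : Prop :=
  TopDRecurrentWrt T fun _ => 1

/-- reiterative hypercyclicity for a sequence of maps -/
def ReiterativelyHypercyclicSeq {X : Type*} [TopologicalSpace X] (T : ℕ → X → X) : Prop :=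
  ∃ x : X, ∀ U : Set X, IsOpen U → U.Nonempty → 0 < upperBanachDensity {n | T n x ∈ U}

/-- 𝒟-reiterative hypercyclicity with respect to a sequence of scalars -/
def DReiterativelyHypercyclicWrt {X : Type*} [NormedAddCommGroup X] [NormedSpace ℂ X]
    (T : X →L[ℂ] X) (l : ℕ → ℂ) : Prop :=
  ∃ p : Ultrafilter ℕ, IsEssentialIdempotent p ∧ ∃ x : X,
    ∀ U : Set X, IsOpen U → U.Nonempty → ∀ r : ℕ,
      {k : ℕ | 0 < upperBanachDensity
        {a : ℕ | ∀ j ≤ r, (T ^ (j * k)) (l a • (T ^ a) x) ∈ U}} ∈ p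

/-- hypercyclic operator -/
def Hypercyclic {X : Type*} [NormedAddCommGroup X] [NormedSpace ℂ X] (T : X →L[ℂ] X) : Prop :=
  ∃ x : X, Dense (Set.range fun n : ℕ => (T ^ n) x)

/-- topological multiple recurrence -/
def TopMultiplyRecurrent {X : Type*} [NormedAddCommGroup X] [NormedSpace ℂ X]
    (T : X →L[ℂ] X) : Prop :=
  ∀ U : Set X, IsOpen U → U.Nonempty → ∀ r : ℕ, ∃ k : ℕ, 0 < k ∧
    ∃ x : X, ∀ j ≤ r, (T ^ (j * k)) x ∈ U

/-- `𝓕`-operator -/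
def FOperator {X : Type*} [NormedAddCommGroup X] [NormedSpace ℂ X]
    (F : Set ℕ → Prop) (T : X →L[ℂ] X) : Prop :=
  ∀ U V : Set X, IsOpen U → IsOpen V → U.Nonempty → V.Nonempty →
    F {n : ℕ | ∃ x ∈ U, (T ^ n) x ∈ V}

/-- mixing operator -/
def MixingOp {X : Type*} [NormedAddCommGroup X] [NormedSpace ℂ X]
    (T : X →L[ℂ] X) : Prop :=
  ∀ U V : Set X, IsOpen U → IsOpen V → U.Nonempty → V.Nonempty →
    {n : ℕ | ∃ x ∈ U, (T ^ n) x ∈ V} ∈ Filter.cofinite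

/-- recurrent operator -/
def RecurrentOp {X : Type*} [NormedAddCommGroup X] [NormedSpace ℂ X]
    (T : X →L[ℂ] X) : Prop :=
  ∀ U : Set X, IsOpen U → U.Nonempty →
    ∃ n : ℕ, 0 < n ∧ (U ∩ (fun x => (T ^ n) x) ⁻¹' U).Nonempty

/-- syndetic set -/
def Syndetic (A : Set ℕ) : Prop :=
  ∃ k : ℕ, 0 < k ∧ ∀ n : ℕ, ∃ i : ℕ, 1 ≤ i ∧ i ≤ k ∧ n + i ∈ A

/-- upper (asymptotic) density -/
noncomputable def upperDensity (A : Set ℕ) : ℝ :=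
  Filter.limsup (fun n : ℕ => (Nat.card (A ∩ Set.Icc 1 n : Set ℕ) : ℝ) / n) Filter.atTop

/-- bounded weight -/
def BddWeight {ι : Type*} (w : ι → ℂ) : Prop := ∃ C : ℝ, ∀ i, ‖w i‖ ≤ C

/-- unilateral weighted backward shift relative to a basis `e` -/
def IsUnilateralWeightedShift {X : Type*} [NormedAddCommGroup X] [NormedSpace ℂ X]
    (e : ℕ → X) (w : ℕ → ℂ) (B : X →L[ℂ] X) : Prop :=
  B (e 0) = 0 ∧ ∀ n : ℕ, B (e (n + 1)) = w (n + 1) • e n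

/-- bilateral weighted backward shift relative to a basis `e` -/
def IsBilateralWeightedShift {X : Type*} [NormedAddCommGroup X] [NormedSpace ℂ X]
    (e : ℤ → X) (w : ℤ → ℂ) (B : X →L[ℂ] X) : Prop :=
  ∀ k : ℤ, B (e k) = w k • e (k - 1)

/-- `B ⊕ B² ⊕ ⋯ ⊕ B^r` acting on `X^r` -/
noncomputable def directSumPow {X : Type*} [NormedAddCommGroup X] [NormedSpace ℂ X]
    (T : X →L[ℂ] X) (r : ℕ) : (Fin r → X) →L[ℂ] (Fin r → X) :=
  ContinuousLinearMap.pi fun i => (T ^ ((i : ℕ) + 1)).comp (ContinuousLinearMap.proj i)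

/-- canonical basis vector of `c₀` over a discrete index type -/
noncomputable def c0Single {α : Type*} [TopologicalSpace α] [DiscreteTopology α]
    [DecidableEq α] (k : α) : ZeroAtInftyContinuousMap α ℂ where
  toFun := fun m => if m = k then 1 else 0
  continuous_toFun := continuous_of_discreteTopology
  zero_at_infty' := by
    rw [Filter.cocompact_eq_cofinite]
    refine Filter.Tendsto.congr' ?_ tendsto_const_nhds
    filter_upwards [Filter.eventually_cofinite_ne k] with m hm
    simp [hm]

/-- the set `A_{M;j}` for a bilateral weight -/
def AMjZ (w : ℤ → ℂ) (M : ℝ) (j : ℤ) : Set ℕ :=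
  {n : ℕ | M < ∏ i ∈ Finset.Icc (j + 1) (j + (n : ℤ)), ‖w i‖}

/-- the set `Ā_{M;j}` for a bilateral weight -/
def AbarMjZ (w : ℤ → ℂ) (M : ℝ) (j : ℤ) : Set ℕ :=
  {n : ℕ | ∏ i ∈ Finset.Icc (j - (n : ℤ) + 1) j, ‖w i‖ < 1 / M}

/-- the set `A_{M;j}` for a unilateral weight -/
def AMjN (w : ℕ → ℂ) (M : ℝ) (j : ℕ) : Set ℕ :=
  {n : ℕ | M < ∏ i ∈ Finset.Icc (j + 1) (j + n), ‖w i‖}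

section AuxWS
variable {p : ℝ≥0∞} [Fact (1 ≤ p)] {w : ℕ → ℂ}
  {B : lp (fun _ : ℕ => ℂ) p →L[ℂ] lp (fun _ : ℕ => ℂ) p}

lemma q_pos (hp : p ≠ ∞) : 0 < p.toReal :=
  ENNReal.toReal_pos (fun h => by simpa [h] using (Fact.out (p := 1 ≤ p))) hp

lemma p_ne_zero : p ≠ 0 :=
  fun h => by simpa [h] using (Fact.out (p := 1 ≤ p))

noncomputable def evalCLM (p : ℝ≥0∞) [Fact (1 ≤ p)] (j : ℕ) :
    lp (fun _ : ℕ => ℂ) p →L[ℂ] ℂ :=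
  LinearMap.mkContinuous
    { toFun := fun f => f j
      map_add' := fun f g => by simp
      map_smul' := fun c f => by simp } 1
    (fun f => by rw [one_mul]; exact lp.norm_apply_le_norm p_ne_zero f j)

@[simp] lemma evalCLM_apply (j : ℕ) (f : lp (fun _ : ℕ => ℂ) p) :
    evalCLM p j f = f j := rfl

noncomputable def Wgt (w : ℕ → ℂ) (j n : ℕ) : ℂ := ∏ i ∈ Finset.Icc (j+1) (j+n), w i

omit [Fact (1 ≤ p)] in
lemma norm_Wgt (hw : ∀ ν : ℕ, 1 ≤ ν → w ν = ((((ν : ℝ) + 1) / ν) ^ (1 / (2 * p.toReal)) : ℝ))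
    (j n : ℕ) :
    ‖Wgt w j n‖ = (((j : ℝ) + n + 1) / ((j : ℝ) + 1)) ^ (1 / (2 * p.toReal)) := by
  set c := 1 / (2 * p.toReal) with hc
  induction n with
  | zero =>
    rw [show ((j:ℝ) + (0:ℕ) + 1) = (j:ℝ)+1 from by push_cast; ring]
    rw [div_self (by positivity : ((j:ℝ)+1) ≠ 0), Real.one_rpow]
    simp [Wgt]
  | succ n ih =>
    have h1 : Wgt w j (n+1) = Wgt w j n * w (j + n + 1) := by
      rw [Wgt, Wgt, show j + (n+1) = (j + n) + 1 from by omega,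
        Finset.prod_Icc_succ_top (by omega)]
    have hwv := hw (j + n + 1) (by omega)
    push_cast at hwv
    have hb : (0:ℝ) < ((j:ℝ) + n + 1 + 1) / ((j:ℝ) + n + 1) := by positivity
    rw [h1, norm_mul, ih, hwv, Complex.norm_real, Real.norm_eq_abs,
      abs_of_nonneg (Real.rpow_nonneg hb.le c)]
    push_cast
    rw [← Real.mul_rpow (by positivity) (by positivity)]
    congr 1
    have h2 : (j:ℝ) + n + 1 ≠ 0 := by positivity
    have h3 : (j:ℝ) + 1 ≠ 0 := by positivity
    field_simp
    ring

lemma norm_Wgt_pos (hw : ∀ ν : ℕ, 1 ≤ ν → w ν = ((((ν : ℝ) + 1) / ν) ^ (1 / (2 * p.toReal)) : ℝ))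
    (j n : ℕ) : 0 < ‖Wgt w j n‖ := by
  rw [norm_Wgt (p := p) hw]; positivity

lemma Wgt_ne_zero (hw : ∀ ν : ℕ, 1 ≤ ν → w ν = ((((ν : ℝ) + 1) / ν) ^ (1 / (2 * p.toReal)) : ℝ))
    (j n : ℕ) : Wgt w j n ≠ 0 :=
  fun h => by simpa [h] using norm_Wgt_pos (p := p) hw j n

lemma single_eq_smul (k : ℕ) (c : ℂ) :
    (lp.single p k c : lp (fun _ : ℕ => ℂ) p) = c • lp.single p k 1 := by
  rw [← lp.single_smul, smul_eq_mul, mul_one]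

variable (hB : (B (lp.single p 0 1) = 0) ∧
  ∀ n : ℕ, B (lp.single p (n+1) 1) = w (n+1) • lp.single p n 1)
include hB

lemma Bpow_single_lt : ∀ n k : ℕ, k < n → (B ^ n) (lp.single p k 1) = 0 := by
  intro n
  induction n with
  | zero => intro k hk; omega
  | succ n ih =>
    intro k hk
    rw [pow_succ, ContinuousLinearMap.mul_apply]
    match k with
    | 0 => rw [hB.1, map_zero]
    | (k+1) => rw [hB.2 k, map_smul, ih k (by omega), smul_zero]

lemma Bpow_single : ∀ n k : ℕ, (B ^ n) (lp.single p (n+k) 1) = Wgt w k n • lp.single p k 1 := by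
  intro n
  induction n with
  | zero => intro k; simp [Wgt]
  | succ n ih =>
    intro k
    rw [pow_succ, ContinuousLinearMap.mul_apply]
    rw [show n + 1 + k = (n + k) + 1 from by omega, hB.2 (n+k), map_smul, ih k, smul_smul,
      Wgt, Wgt, show k + (n+1) = (k + n) + 1 from by omega,
      Finset.prod_Icc_succ_top (by omega)]
    congr 1
    rw [mul_comm]
    congr 2
    omega

lemma Bpow_coord (hp : p ≠ ∞) (f : lp (fun _ : ℕ => ℂ) p) (n j : ℕ) :
    ((B ^ n) f : lp (fun _ : ℕ => ℂ) p) j = Wgt w j n * f (n + j) := by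
  have hs := lp.hasSum_single hp f
  have hs2 := ((evalCLM p j).comp (B ^ n)).hasSum hs
  simp only [ContinuousLinearMap.coe_comp', Function.comp_apply, evalCLM_apply] at hs2
  have key : ∀ k : ℕ, k ≠ n + j →
      ((B ^ n) (lp.single p k (f k)) : lp (fun _ : ℕ => ℂ) p) j = 0 := by
    intro k hk
    rw [single_eq_smul, map_smul]
    rcases lt_or_ge k n with h | h
    · rw [Bpow_single_lt hB n k h]; simp
    · obtain ⟨k', rfl⟩ : ∃ k', k = n + k' := ⟨k - n, by omega⟩
      rw [Bpow_single hB n k']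
      have hk' : k' ≠ j := fun h => hk (by omega)
      simp [lp.coeFn_smul, lp.single_apply_ne p k' _ hk'.symm, Pi.single_apply, hk'.symm]
  have hval : ((B ^ n) f : lp (fun _ : ℕ => ℂ) p) j
      = ((B ^ n) (lp.single p (n+j) (f (n+j))) : lp (fun _ : ℕ => ℂ) p) j :=
    (hs2.unique (hasSum_single (n+j) key))
  rw [hval, single_eq_smul, map_smul, Bpow_single hB n j]
  simp [lp.coeFn_smul, lp.single_apply_self, mul_comm]
end AuxWS

section AuxWS2
variable {p : ℝ≥0∞} [Fact (1 ≤ p)] {w : ℕ → ℂ}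
  {B : lp (fun _ : ℕ => ℂ) p →L[ℂ] lp (fun _ : ℕ => ℂ) p}

lemma mixing_aux (hp : p ≠ ∞)
    (hw : ∀ ν : ℕ, 1 ≤ ν → w ν = ((((ν : ℝ) + 1) / ν) ^ (1 / (2 * p.toReal)) : ℝ))
    (hB : (B (lp.single p 0 1) = 0) ∧
      ∀ n : ℕ, B (lp.single p (n+1) 1) = w (n+1) • lp.single p n 1) :
    MixingOp B := by
  have hq : 0 < p.toReal := q_pos hp
  intro U V hU hV ⟨u', hu'⟩ ⟨v', hv'⟩
  obtain ⟨εu, hεu, hballU⟩ := Metric.isOpen_iff.1 hU u' hu'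
  obtain ⟨εv, hεv, hballV⟩ := Metric.isOpen_iff.1 hV v' hv'
  obtain ⟨N, hN⟩ := Metric.tendsto_atTop.1 (lp.hasSum_single hp u').tendsto_sum_nat
    (εu/2) (by positivity)
  obtain ⟨M, hM⟩ := Metric.tendsto_atTop.1 (lp.hasSum_single hp v').tendsto_sum_nat
    εv hεv
  set u : lp (fun _ : ℕ => ℂ) p := ∑ k ∈ Finset.range N, lp.single p k (u' k) with hu
  set v : lp (fun _ : ℕ => ℂ) p := ∑ j ∈ Finset.range M, lp.single p j (v' j) with hv
  have hvV : v ∈ V := hballV (by rw [Metric.mem_ball]; exact hM M le_rfl)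
  set z : ℕ → lp (fun _ : ℕ => ℂ) p :=
    fun n => ∑ j ∈ Finset.range M, (v' j / Wgt w j n) • lp.single p (n+j) 1 with hz
  have hBz : ∀ n, (B ^ n) (z n) = v := by
    intro n
    rw [hz, map_sum, hv]
    refine Finset.sum_congr rfl fun j _ => ?_
    rw [map_smul, Bpow_single hB n j, smul_smul,
      div_mul_cancel₀ _ (Wgt_ne_zero hw j n), ← single_eq_smul]
  have hBu : ∀ n, N ≤ n → (B ^ n) u = 0 := by
    intro n hn
    rw [hu, map_sum]
    refine Finset.sum_eq_zero fun k hk => ?_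
    rw [single_eq_smul, map_smul,
      Bpow_single_lt hB n k (lt_of_lt_of_le (Finset.mem_range.1 hk) hn), smul_zero]
  have hzn : Tendsto (fun n => ‖z n‖) atTop (nhds 0) := by
    have hb : ∀ n, ‖z n‖ ≤ ∑ j ∈ Finset.range M, ‖v' j‖ / ‖Wgt w j n‖ := by
      intro n
      refine (norm_sum_le _ _).trans (Finset.sum_le_sum fun j _ => ?_)
      rw [norm_smul, norm_div]
      have h1 : ‖(lp.single p (n+j) 1 : lp (fun _ : ℕ => ℂ) p)‖ = 1 := by
        have := lp.norm_single (E := fun _ : ℕ => ℂ) (pos_iff_ne_zero.2 (p_ne_zero (p := p))) (n+j) (1:ℂ)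
        simpa using this
      rw [h1, mul_one]
    have hlim : Tendsto (fun n => ∑ j ∈ Finset.range M, ‖v' j‖ / ‖Wgt w j n‖)
        atTop (nhds 0) := by
      have : (0:ℝ) = ∑ j ∈ Finset.range M, (0:ℝ) := by simp
      rw [this]
      refine tendsto_finset_sum _ fun j _ => ?_
      refine Tendsto.div_atTop tendsto_const_nhds ?_
      have h2 : Tendsto (fun n : ℕ => ((j:ℝ) + n + 1)/((j:ℝ)+1)) atTop atTop := by
        apply Filter.Tendsto.atTop_div_const (by positivity : (0:ℝ) < (j:ℝ)+1)
        have h4 : Tendsto (fun n : ℕ => (n:ℝ)) atTop atTop := tendsto_natCast_atTop_atTop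
        have h5 := tendsto_atTop_add_const_right atTop ((j:ℝ)) h4
        have h6 := tendsto_atTop_add_const_right atTop (1:ℝ) h5
        refine h6.congr fun n => by ring
      have h3 : Tendsto (fun n : ℕ => (((j:ℝ) + n + 1)/((j:ℝ)+1)) ^ (1/(2*p.toReal))) atTop atTop :=
        (tendsto_rpow_atTop (by positivity)).comp h2
      exact h3.congr fun n => (norm_Wgt hw j n).symm
    exact squeeze_zero (fun n => norm_nonneg _) hb hlim
  obtain ⟨N₁, hN₁⟩ := Metric.tendsto_atTop.1 hzn (εu/2) (by positivity)
  rw [Nat.cofinite_eq_atTop, Filter.mem_atTop_sets]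
  refine ⟨max N N₁, fun n hn => ?_⟩
  refine ⟨u + z n, ?_, ?_⟩
  · apply hballU
    rw [Metric.mem_ball, dist_eq_norm]
    have h1 : ‖u - u'‖ < εu/2 := by
      have := hN N le_rfl
      rwa [dist_eq_norm] at this
    have h2 : ‖z n‖ < εu/2 := by
      have := hN₁ n (le_trans (le_max_right _ _) hn)
      rwa [Real.dist_eq, sub_zero, abs_of_nonneg (norm_nonneg _)] at this
    calc ‖u + z n - u'‖ = ‖(u - u') + z n‖ := by rw [add_sub_right_comm]
      _ ≤ ‖u - u'‖ + ‖z n‖ := norm_add_le _ _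
      _ < εu/2 + εu/2 := by linarith
      _ = εu := by ring
  · rw [map_add, hBu n (le_trans (le_max_left _ _) hn), hBz n, zero_add]
    exact hvV

lemma density_aux (hp : p ≠ ∞)
    (hw : ∀ ν : ℕ, 1 ≤ ν → w ν = ((((ν : ℝ) + 1) / ν) ^ (1 / (2 * p.toReal)) : ℝ))
    (hB : (B (lp.single p 0 1) = 0) ∧
      ∀ n : ℕ, B (lp.single p (n+1) 1) = w (n+1) • lp.single p n 1)
    (x : lp (fun _ : ℕ => ℂ) p) :
    upperBanachDensity {n : ℕ | ‖(B ^ n) x - lp.single p 0 1‖ < 1 / 2} = 0 := by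
  classical
  set q := p.toReal with hqdef
  have hq : 0 < q := q_pos hp
  set c := 1 / (2 * q) with hcdef
  have hcq : c * q = 1 / 2 := by
    rw [hcdef]; field_simp
  have hcpos : 0 < c := by positivity
  set A : Set ℕ := {n : ℕ | ‖(B ^ n) x - lp.single p 0 1‖ < 1 / 2} with hA
  -- Step 1 : lower bound on coordinates
  have step1 : ∀ m ∈ A, (1:ℝ)/2 < ((m:ℝ)+1) ^ c * ‖x m‖ := by
    intro m hm
    have hmem : ‖(B ^ m) x - lp.single p 0 1‖ < 1/2 := hm
    have h0 : ‖((B ^ m) x - lp.single p 0 1 : lp (fun _ : ℕ => ℂ) p) 0‖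
        ≤ ‖(B ^ m) x - lp.single p 0 1‖ := lp.norm_apply_le_norm (p_ne_zero) _ 0
    have hcoord : ((B ^ m) x - lp.single p 0 1 : lp (fun _ : ℕ => ℂ) p) 0
        = Wgt w 0 m * x m - 1 := by
      rw [lp.coeFn_sub, Pi.sub_apply, Bpow_coord hB hp x m 0, lp.single_apply_self,
        Nat.add_zero]
    have hnw : ‖Wgt w 0 m‖ = ((m:ℝ)+1) ^ c := by
      rw [norm_Wgt hw 0 m,
        show (((0:ℕ):ℝ) + (m:ℝ) + 1)/(((0:ℕ):ℝ)+1) = (m:ℝ)+1 from by norm_num]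
    have h1 : ‖(1:ℂ)‖ - ‖Wgt w 0 m * x m‖ ≤ ‖(1:ℂ) - Wgt w 0 m * x m‖ :=
      norm_sub_norm_le _ _
    rw [norm_sub_rev, norm_mul, hnw, norm_one] at h1
    rw [hcoord] at h0
    linarith [lt_of_le_of_lt h0 hmem]
  -- Step 2 : summability constraint
  have step2 : ∀ n ∈ A, ∀ F : Finset ℕ, (∀ m ∈ F, m ∈ A) → (∀ m ∈ F, n < m) →
      ∑ m ∈ F, ((((m - n : ℕ)):ℝ) + 1) ^ (-(1/2) : ℝ) < 1 := by
    intro n hn F hFA hFn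
    have hinj : ∀ m ∈ F, ∀ m' ∈ F, m - n = m' - n → m = m' := by
      intro m hm m' hm' h
      have := hFn m hm; have := hFn m' hm'; omega
    set G : Finset ℕ := F.image (fun m => m - n) with hG
    have hsum : ∑ j ∈ G, ‖((B ^ n) x - lp.single p 0 1 : lp (fun _ : ℕ => ℂ) p) j‖ ^ q
        ≤ ‖(B ^ n) x - lp.single p 0 1‖ ^ q := lp.sum_rpow_le_norm_rpow hq _ G
    have hlt : ‖(B ^ n) x - lp.single p 0 1‖ ^ q < (1/2 : ℝ) ^ q :=
      Real.rpow_lt_rpow (norm_nonneg _) hn hq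
    have himg : ∑ j ∈ G, ‖((B ^ n) x - lp.single p 0 1 : lp (fun _ : ℕ => ℂ) p) j‖ ^ q
        = ∑ m ∈ F, ‖((B ^ n) x - lp.single p 0 1 : lp (fun _ : ℕ => ℂ) p) (m - n)‖ ^ q :=
      Finset.sum_image hinj
    have hterm : ∀ m ∈ F, (1/2 : ℝ) ^ q * ((((m - n : ℕ)):ℝ) + 1) ^ (-(1/2) : ℝ)
        ≤ ‖((B ^ n) x - lp.single p 0 1 : lp (fun _ : ℕ => ℂ) p) (m - n)‖ ^ q := by
      intro m hm
      have hnm : n < m := hFn m hm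
      set j : ℕ := m - n with hj
      have hj0 : j ≠ 0 := by omega
      have hcoord : ((B ^ n) x - lp.single p 0 1 : lp (fun _ : ℕ => ℂ) p) j
          = Wgt w j n * x m := by
        rw [lp.coeFn_sub, Pi.sub_apply, Bpow_coord hB hp x n j,
          lp.single_apply_ne p 0 _ hj0, sub_zero, show n + j = m from by omega]
      rw [hcoord, norm_mul, norm_Wgt hw j n]
      have hjm : (j:ℝ) + n + 1 = (m:ℝ) + 1 := by
        have : (j:ℝ) = (m:ℝ) - (n:ℝ) := by
          rw [hj]; push_cast [Nat.cast_sub hnm.le]; ring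
        rw [this]; ring
      rw [hjm]
      set a : ℝ := (m:ℝ) + 1 with ha
      set b : ℝ := (j:ℝ) + 1 with hb
      have hapos : 0 < a := by positivity
      have hbpos : 0 < b := by positivity
      have hxm : (1/2 : ℝ) / a ^ c < ‖x m‖ := by
        have := step1 m (hFA m hm)
        rw [div_lt_iff₀ (by positivity)]
        linarith [this]
      -- raise to the power q
      have hxmq : ((1/2 : ℝ) / a ^ c) ^ q ≤ ‖x m‖ ^ q :=
        Real.rpow_le_rpow (by positivity) hxm.le hq.le
      have hexp : ((a / b) ^ c * ‖x m‖) ^ q = (a/b) ^ (c*q) * ‖x m‖ ^ q := by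
        rw [Real.mul_rpow (by positivity) (norm_nonneg _),
          ← Real.rpow_mul (by positivity : (0:ℝ) ≤ a/b)]
      have hdiv : ((1/2 : ℝ)/a^c)^q = (1/2:ℝ)^q / a^((1:ℝ)/2) := by
        rw [Real.div_rpow (by norm_num) (by positivity),
          ← Real.rpow_mul hapos.le, hcq]
      have hfinal : (a/b)^((1:ℝ)/2) * ((1/2:ℝ)^q / a^((1:ℝ)/2)) = (1/2:ℝ)^q * b^(-(1/2):ℝ) := by
        rw [Real.div_rpow hapos.le hbpos.le, Real.rpow_neg hbpos.le]
        have ha2 : a^((1:ℝ)/2) ≠ 0 := by positivity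
        have hb2 : b^((1:ℝ)/2) ≠ 0 := by positivity
        field_simp
      rw [hexp, hcq]
      calc (1/2:ℝ)^q * b^(-(1/2):ℝ)
          = (a/b)^((1:ℝ)/2) * ((1/2:ℝ)^q / a^((1:ℝ)/2)) := hfinal.symm
        _ ≤ (a/b)^((1:ℝ)/2) * ‖x m‖^q := by
            apply mul_le_mul_of_nonneg_left _ (Real.rpow_nonneg (by positivity) _)
            rw [← hdiv]; exact hxmq
    -- combine
    rw [himg] at hsum
    have hsum2 : (1/2:ℝ)^q * ∑ m ∈ F, ((((m - n : ℕ)):ℝ) + 1) ^ (-(1/2) : ℝ)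
        ≤ ∑ m ∈ F, ‖((B ^ n) x - lp.single p 0 1 : lp (fun _ : ℕ => ℂ) p) (m - n)‖ ^ q := by
      rw [Finset.mul_sum]; exact Finset.sum_le_sum hterm
    have hfin : (1/2:ℝ)^q * ∑ m ∈ F, ((((m - n : ℕ)):ℝ) + 1) ^ (-(1/2) : ℝ)
        < (1/2:ℝ)^q * 1 := by
      rw [mul_one]; exact lt_of_le_of_lt (hsum2.trans hsum) hlt
    exact lt_of_mul_lt_mul_left hfin (by positivity)
  -- Step 3 : blockCount bound
  have step3 : ∀ k s : ℕ, (blockCount A k s : ℝ) ≤ (s:ℝ) ^ ((1:ℝ)/2) + 1 := by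
    intro k s
    set F : Finset ℕ := (Finset.Icc (k+1) (k+s)).filter (· ∈ A) with hF
    have hset : (A ∩ Set.Icc (k+1) (k+s) : Set ℕ) = ↑F := by
      ext m
      simp only [hF, Finset.coe_filter, Finset.mem_Icc, Set.mem_setOf_eq,
        Set.mem_inter_iff, Set.mem_Icc]
      tauto
    have hbc : blockCount A k s = F.card := by
      rw [blockCount, hset, Nat.card_coe_set_eq, Set.ncard_coe_finset]
    rcases F.eq_empty_or_nonempty with hFe | hFne
    · rw [hbc, hFe]
      simp
      positivity
    · set n : ℕ := F.min' hFne with hmin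
      have hnF : n ∈ F := F.min'_mem hFne
      have hnI : k + 1 ≤ n ∧ n ≤ k + s := by
        have := (Finset.mem_filter.1 hnF).1
        exact Finset.mem_Icc.1 this
      have hs1 : 1 ≤ s := by omega
      have hnA : n ∈ A := (Finset.mem_filter.1 hnF).2
      set F' : Finset ℕ := F.erase n with hF'
      have hF'A : ∀ m ∈ F', m ∈ A := fun m hm =>
        (Finset.mem_filter.1 (Finset.mem_of_mem_erase hm)).2
      have hF'n : ∀ m ∈ F', n < m := by
        intro m hm
        have h1 : m ∈ F := Finset.mem_of_mem_erase hm
        have h2 : m ≠ n := Finset.ne_of_mem_erase hm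
        exact lt_of_le_of_ne (F.min'_le m h1) (Ne.symm h2)
      have hkey := step2 n hnA F' hF'A hF'n
      have hterm2 : ∀ m ∈ F', ((s:ℝ)) ^ (-(1/2) : ℝ) ≤ ((((m - n : ℕ)):ℝ) + 1) ^ (-(1/2) : ℝ) := by
        intro m hm
        have hmI := Finset.mem_Icc.1 (Finset.mem_filter.1 (Finset.mem_of_mem_erase hm)).1
        have hb : ((((m - n : ℕ)):ℝ) + 1) ≤ (s:ℝ) := by
          have : (m - n : ℕ) + 1 ≤ s := by omega
          exact_mod_cast this
        have hbpos : (0:ℝ) < (((m - n : ℕ)):ℝ) + 1 := by positivity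
        rw [Real.rpow_neg hbpos.le, Real.rpow_neg (by positivity : (0:ℝ) ≤ (s:ℝ))]
        apply inv_anti₀ (Real.rpow_pos_of_pos hbpos _)
        exact Real.rpow_le_rpow hbpos.le hb (by norm_num)
      have hcard : (F'.card : ℝ) * ((s:ℝ)) ^ (-(1/2) : ℝ) < 1 := by
        calc (F'.card : ℝ) * ((s:ℝ)) ^ (-(1/2) : ℝ)
            = ∑ _m ∈ F', ((s:ℝ)) ^ (-(1/2) : ℝ) := by
              rw [Finset.sum_const, nsmul_eq_mul]
          _ ≤ ∑ m ∈ F', ((((m - n : ℕ)):ℝ) + 1) ^ (-(1/2) : ℝ) :=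
              Finset.sum_le_sum hterm2
          _ < 1 := hkey
      have hspos : (0:ℝ) < (s:ℝ) := by exact_mod_cast hs1
      have hsr : ((s:ℝ)) ^ ((1:ℝ)/2) * ((s:ℝ)) ^ (-(1/2) : ℝ) = 1 := by
        rw [← Real.rpow_add hspos]
        norm_num
      have hcard2 : (F'.card : ℝ) < ((s:ℝ)) ^ ((1:ℝ)/2) := by
        by_contra hcon
        push_neg at hcon
        have := mul_le_mul_of_nonneg_right hcon
          (Real.rpow_nonneg hspos.le (-(1/2) : ℝ))
        rw [hsr] at this
        linarith
      have hcards : F.card = F'.card + 1 := by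
        rw [hF', Finset.card_erase_of_mem hnF]
        have : 1 ≤ F.card := Finset.card_pos.2 hFne
        omega
      rw [hbc, hcards]
      push_cast
      linarith
  -- Step 4 : limsup computation
  have inner_ub : ∀ s : ℕ, Filter.limsup (fun k : ℕ => (blockCount A k s : ℝ)) Filter.atTop
      ≤ (s:ℝ) ^ ((1:ℝ)/2) + 1 := by
    intro s
    apply Filter.limsup_le_of_le
    · exact Filter.IsBoundedUnder.isCoboundedUnder_le
        (Filter.isBoundedUnder_of ⟨0, fun k => Nat.cast_nonneg _⟩)
    · exact Filter.Eventually.of_forall (fun k => step3 k s)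
  have inner_lb : ∀ s : ℕ, (0:ℝ) ≤ Filter.limsup (fun k : ℕ => (blockCount A k s : ℝ)) Filter.atTop := by
    intro s
    apply Filter.le_limsup_of_frequently_le
    · exact Filter.Frequently.of_forall (fun k => Nat.cast_nonneg _)
    · exact Filter.isBoundedUnder_of ⟨(s:ℝ) ^ ((1:ℝ)/2) + 1, fun k => step3 k s⟩
  have hg_ub : ∀ s : ℕ, 1 ≤ s →
      (Filter.limsup (fun k : ℕ => (blockCount A k s : ℝ)) Filter.atTop) / s
        ≤ ((s:ℝ) ^ ((1:ℝ)/2) + 1) / s := by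
    intro s hs
    have hs0 : (0:ℝ) < (s:ℝ) := by exact_mod_cast hs
    exact (div_le_div_iff_of_pos_right hs0).2 (inner_ub s)
  have hg_lb : ∀ s : ℕ,
      (0:ℝ) ≤ (Filter.limsup (fun k : ℕ => (blockCount A k s : ℝ)) Filter.atTop) / s :=
    fun s => div_nonneg (inner_lb s) (Nat.cast_nonneg s)
  have hbound : Filter.Tendsto (fun s : ℕ => ((s:ℝ) ^ ((1:ℝ)/2) + 1) / s)
      Filter.atTop (nhds 0) := by
    have h1 : Filter.Tendsto (fun t : ℝ => t ^ (-(1/2) : ℝ) + t⁻¹) Filter.atTop (nhds 0) := by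
      have := (tendsto_rpow_neg_atTop (by norm_num : (0:ℝ) < 1/2)).add
        tendsto_inv_atTop_zero
      simpa using this
    have h2 := h1.comp (tendsto_natCast_atTop_atTop (R := ℝ))
    apply Filter.Tendsto.congr' _ h2
    filter_upwards [Filter.eventually_ge_atTop 1] with s hs
    have hs0 : (0:ℝ) < (s:ℝ) := by exact_mod_cast hs
    have hhalf : (s:ℝ) ^ ((1:ℝ)/2) / (s:ℝ) = (s:ℝ) ^ (-(1/2) : ℝ) := by
      rw [show (-(1/2):ℝ) = 1/2 - 1 from by norm_num, Real.rpow_sub hs0, Real.rpow_one]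
    simp only [Function.comp_apply]
    rw [← hhalf]
    field_simp
  have hgt : Filter.Tendsto (fun s : ℕ =>
      (Filter.limsup (fun k : ℕ => (blockCount A k s : ℝ)) Filter.atTop) / s)
      Filter.atTop (nhds 0) := by
    apply squeeze_zero' (Filter.Eventually.of_forall hg_lb) _ hbound
    filter_upwards [Filter.eventually_ge_atTop 1] with s hs
    exact hg_ub s hs
  exact Filter.Tendsto.limsup_eq hgt
end AuxWS2

theorem stmt15 (p : ℝ≥0∞) [Fact (1 ≤ p)] (_hp : p ≠ ∞)
    (w : ℕ → ℂ)
    (_hw : ∀ ν : ℕ, 1 ≤ ν → w ν = ((((ν : ℝ) + 1) / ν) ^ (1 / (2 * p.toReal)) : ℝ))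
    (B : lp (fun _ : ℕ => ℂ) p →L[ℂ] lp (fun _ : ℕ => ℂ) p)
    (_hB : IsUnilateralWeightedShift (fun n => lp.single p n 1) w B) :
    MixingOp B ∧
      ∀ x : lp (fun _ : ℕ => ℂ) p,
        upperBanachDensity {n : ℕ | ‖(B ^ n) x - lp.single p 0 1‖ < 1 / 2} = 0 := by
  have hB' : (B (lp.single p 0 1) = 0) ∧
      ∀ n : ℕ, B (lp.single p (n+1) 1) = w (n+1) • lp.single p n 1 := _hB
  exact ⟨mixing_aux _hp _hw hB', fun x => density_aux _hp _hw hB' x⟩
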